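/- arXiv:2304.02207 — 3 statements merged into one kernel-verified Lean document; each statement's English description precedes it below -/
import Mathlib

section
/- Let M, P, V be n×n matrices with entries in {0,1}. Define real matrices Q̃ = M, K̃ with K̃^T = P, Ṽ = V. If ((exp_entrywise(Q̃ K̃^T) − 1_{n×n}) Ṽ)_{j,i} = 0 for some i, j ∈ [n], then the boolean matrix product satisfies (M P V)_{j,i} = 0. -/
open scoped Classical

/-- Entrywise exponential of a matrix. -/
noncomputable def expEntry {m k : Type*} (M : Matrix m k ℝ) : Matrix m k ℝ :=
  Matrix.of fun a b => Real.exp (M a b)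

/-- The all-ones matrix. -/
def onesMat (m k : Type*) : Matrix m k ℝ := Matrix.of fun _ _ => (1 : ℝ)

/-- Boolean-semiring triple product entry for 0/1 matrices. -/
noncomputable def boolProd3 {n : ℕ} (M P V : Matrix (Fin n) (Fin n) ℝ)
    (j i : Fin n) : ℝ :=
  if ∃ l k, M j l = 1 ∧ P l k = 1 ∧ V k i = 1 then 1 else 0

theorem zero_entry_implies_boolProd_zero (n : ℕ)
    (M P V : Matrix (Fin n) (Fin n) ℝ)
    (hM : ∀ a b, M a b = 0 ∨ M a b = 1)
    (hP : ∀ a b, P a b = 0 ∨ P a b = 1)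
    (hV : ∀ a b, V a b = 0 ∨ V a b = 1)
    (Q K : Matrix (Fin n) (Fin n) ℝ)
    (hQ : Q = M) (hK : Matrix.transpose K = P)
    (i j : Fin n)
    (hzero : ((expEntry (Q * Matrix.transpose K) - onesMat (Fin n) (Fin n)) * V) j i = 0) :
    boolProd3 M P V j i = 0 := by
  rw [hQ] at hzero
  rw [hK] at hzero
  unfold boolProd3
  rw [if_neg]
  rintro ⟨l, k, hMl, hPk, hVk⟩
  -- entries of M, P, V are nonneg
  have hMnn : ∀ a b, 0 ≤ M a b := fun a b => by rcases hM a b with h | h <;> simp [h]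
  have hPnn : ∀ a b, 0 ≤ P a b := fun a b => by rcases hP a b with h | h <;> simp [h]
  have hVnn : ∀ a b, 0 ≤ V a b := fun a b => by rcases hV a b with h | h <;> simp [h]
  have hMPnn : ∀ c, 0 ≤ (M * P) j c := by
    intro c
    rw [Matrix.mul_apply]
    exact Finset.sum_nonneg fun x _ => mul_nonneg (hMnn j x) (hPnn x c)
  -- each summand is nonneg
  have hterm : ∀ c, 0 ≤ (expEntry (M * P) - onesMat (Fin n) (Fin n)) j c * V c i := by
    intro c
    apply mul_nonneg _ (hVnn c i)
    simp only [Matrix.sub_apply, expEntry, onesMat, Matrix.of_apply, sub_nonneg]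
    calc (1:ℝ) = Real.exp 0 := Real.exp_zero.symm
    _ ≤ Real.exp ((M * P) j c) := Real.exp_le_exp.mpr (hMPnn c)
  rw [Matrix.mul_apply] at hzero
  have hall := (Finset.sum_eq_zero_iff_of_nonneg (fun c _ => hterm c)).mp hzero
  have hk := hall k (Finset.mem_univ k)
  -- (M*P) j k ≥ 1
  have hMP1 : (1:ℝ) ≤ (M * P) j k := by
    rw [Matrix.mul_apply]
    calc (1:ℝ) = M j l * P l k := by rw [hMl, hPk]; ring
    _ ≤ ∑ x, M j x * P x k :=
        Finset.single_le_sum (f := fun x => M j x * P x k)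
          (fun x _ => mul_nonneg (hMnn j x) (hPnn x k)) (Finset.mem_univ l)
  have hexp : (0:ℝ) < (expEntry (M * P) - onesMat (Fin n) (Fin n)) j k := by
    simp only [Matrix.sub_apply, expEntry, onesMat, Matrix.of_apply, sub_pos]
    calc (1:ℝ) < Real.exp 1 := by
          have := Real.exp_one_gt_d9; linarith
    _ ≤ Real.exp ((M * P) j k) := Real.exp_le_exp.mpr hMP1
  rw [hVk, mul_one] at hk
  linarith
end

section
/- Let M, P, V ∈ {0,1}^{n×n} with P diagonal. Define 𝖬 = [M M̄] (M̄ the entrywise complement of M), 𝖵 = [V; 0_{n×n}] ∈ {0,1}^{2n×n}, Q̃ = [𝖬; 0_{n×2n}] ∈ R^{2n×2n}, K̃^T = block diag(P,P), Ṽ = [𝖵 0_{2n×n}]. If for i, j ∈ [n] we have ((exp_entrywise(Q̃ K̃^T) − 1_{2n×2n}) Ṽ)_{j,i} > 0, then the boolean semiring product (𝖬 𝖯 𝖵)_{j,i} = 1, where 𝖯 = block diag(P,P). -/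
open scoped Classical

theorem block_positive_entry_implies_boolProd_one (n : ℕ)
    (M P V : Matrix (Fin n) (Fin n) ℝ)
    (hM : ∀ a b, M a b = 0 ∨ M a b = 1)
    (hP01 : ∀ a b, P a b = 0 ∨ P a b = 1)
    (hPdiag : ∀ a b, a ≠ b → P a b = 0)
    (hV : ∀ a b, V a b = 0 ∨ V a b = 1) :
    -- 𝖬 = [M M̄], 𝖵 = [V; 0], Q̃ = [𝖬; 0], K̃ᵀ = 𝖯 = diag(P,P), Ṽ = [𝖵 0]
    let Mbig : Matrix (Fin n) (Fin n ⊕ Fin n) ℝ :=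
      Matrix.fromCols M (Matrix.of fun a b => 1 - M a b)
    let Vbig : Matrix (Fin n ⊕ Fin n) (Fin n) ℝ := Matrix.fromRows V 0
    let Qbig : Matrix (Fin n ⊕ Fin n) (Fin n ⊕ Fin n) ℝ := Matrix.fromRows Mbig 0
    let Pbig : Matrix (Fin n ⊕ Fin n) (Fin n ⊕ Fin n) ℝ := Matrix.fromBlocks P 0 0 P
    let Vtil : Matrix (Fin n ⊕ Fin n) (Fin n ⊕ Fin n) ℝ := Matrix.fromCols Vbig 0
    ∀ i j : Fin n,
      ((expEntry (Qbig * Pbig) - onesMat (Fin n ⊕ Fin n) (Fin n ⊕ Fin n)) * Vtil)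
          (Sum.inl j) (Sum.inl i) > 0 →
      (if ∃ (l k : Fin n ⊕ Fin n), Mbig j l = 1 ∧ Pbig l k = 1 ∧ Vbig k i = 1
        then (1 : ℝ) else 0) = 1 := by
  intro Mbig Vbig Qbig Pbig Vtil i j hpos
  -- 0/1 facts
  have hM01 : ∀ l, Mbig j l = 0 ∨ Mbig j l = 1 := by
    rintro (l | l)
    · simpa [Mbig] using hM j l
    · rcases hM j l with h | h <;> simp [Mbig, h]
  have hP01' : ∀ l k, Pbig l k = 0 ∨ Pbig l k = 1 := by
    rintro (l | l) (k | k) <;> simp [Pbig] <;> exact hP01 l k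
  have hV01 : ∀ k, Vbig k i = 0 ∨ Vbig k i = 1 := by
    rintro (k | k)
    · simpa [Vbig] using hV k i
    · simp [Vbig]
  -- nonnegativity
  have hMnn : ∀ l, 0 ≤ Mbig j l := fun l => by rcases hM01 l with h | h <;> simp [h]
  have hPnn : ∀ l k, 0 ≤ Pbig l k := fun l k => by rcases hP01' l k with h | h <;> simp [h]
  have hVnn : ∀ k, 0 ≤ Vbig k i := fun k => by rcases hV01 k with h | h <;> simp [h]
  have hQP : ∀ k, (Qbig * Pbig) (Sum.inl j) k = ∑ l, Mbig j l * Pbig l k := by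
    intro k
    simp [Qbig, Matrix.mul_apply]
  have hQPnn : ∀ k, 0 ≤ (Qbig * Pbig) (Sum.inl j) k := by
    intro k
    rw [hQP k]
    exact Finset.sum_nonneg fun l _ => mul_nonneg (hMnn l) (hPnn l k)
  -- expand the product entry
  have hent : ((expEntry (Qbig * Pbig) - onesMat (Fin n ⊕ Fin n) (Fin n ⊕ Fin n)) * Vtil)
      (Sum.inl j) (Sum.inl i)
      = ∑ k, (Real.exp ((Qbig * Pbig) (Sum.inl j) k) - 1) * Vbig k i := by
    simp [Matrix.mul_apply, expEntry, onesMat, Vtil]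
  rw [hent] at hpos
  have hterm : ∃ k, 0 < (Real.exp ((Qbig * Pbig) (Sum.inl j) k) - 1) * Vbig k i := by
    by_contra hc
    push_neg at hc
    have : ∑ k, (Real.exp ((Qbig * Pbig) (Sum.inl j) k) - 1) * Vbig k i ≤ 0 :=
      Finset.sum_nonpos fun k _ => hc k
    linarith
  obtain ⟨k, hk⟩ := hterm
  have hVk : Vbig k i = 1 := by
    rcases hV01 k with h | h
    · rw [h, mul_zero] at hk; exact absurd hk (lt_irrefl 0)
    · exact h
  rw [hVk, mul_one] at hk
  have hx : 0 < (Qbig * Pbig) (Sum.inl j) k := by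
    by_contra hc
    push_neg at hc
    have := Real.exp_le_one_iff.mpr hc
    linarith
  rw [hQP k] at hx
  have hl : ∃ l, 0 < Mbig j l * Pbig l k := by
    by_contra hc
    push_neg at hc
    have : ∑ l, Mbig j l * Pbig l k ≤ 0 := Finset.sum_nonpos fun l _ => hc l
    linarith
  obtain ⟨l, hl⟩ := hl
  have hMl : Mbig j l = 1 := by
    rcases hM01 l with h | h
    · rw [h, zero_mul] at hl; exact absurd hl (lt_irrefl 0)
    · exact h
  have hPl : Pbig l k = 1 := by
    rcases hP01' l k with h | h
    · rw [h, mul_zero] at hl; exact absurd hl (lt_irrefl 0)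
    · exact h
  rw [if_pos ⟨l, k, hMl, hPl, hVk⟩]
end

section
/- Let M, P, V ∈ {0,1}^{n×n} with P diagonal. With the block constructions 𝖬 = [M M̄], 𝖵 = [V; 0], Q̃ = [𝖬; 0], K̃^T = diag(P,P), Ṽ = [𝖵 0]: if ((exp_entrywise(Q̃ K̃^T) − 1_{2n×2n}) Ṽ)_{j,i} = 0 for i, j ∈ [n], then the boolean semiring product (𝖬 𝖯 𝖵)_{j,i} = 0 where 𝖯 = diag(P,P). -/
open scoped Classical

theorem block_zero_entry_implies_boolProd_zero (n : ℕ)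
    (M P V : Matrix (Fin n) (Fin n) ℝ)
    (hM : ∀ a b, M a b = 0 ∨ M a b = 1)
    (hP01 : ∀ a b, P a b = 0 ∨ P a b = 1)
    (hPdiag : ∀ a b, a ≠ b → P a b = 0)
    (hV : ∀ a b, V a b = 0 ∨ V a b = 1) :
    -- 𝖬 = [M M̄], 𝖵 = [V; 0], Q̃ = [𝖬; 0], K̃ᵀ = 𝖯 = diag(P,P), Ṽ = [𝖵 0]
    let Mbig : Matrix (Fin n) (Fin n ⊕ Fin n) ℝ :=
      Matrix.fromCols M (Matrix.of fun a b => 1 - M a b)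
    let Vbig : Matrix (Fin n ⊕ Fin n) (Fin n) ℝ := Matrix.fromRows V 0
    let Qbig : Matrix (Fin n ⊕ Fin n) (Fin n ⊕ Fin n) ℝ := Matrix.fromRows Mbig 0
    let Pbig : Matrix (Fin n ⊕ Fin n) (Fin n ⊕ Fin n) ℝ := Matrix.fromBlocks P 0 0 P
    let Vtil : Matrix (Fin n ⊕ Fin n) (Fin n ⊕ Fin n) ℝ := Matrix.fromCols Vbig 0
    ∀ i j : Fin n,
      ((expEntry (Qbig * Pbig) - onesMat (Fin n ⊕ Fin n) (Fin n ⊕ Fin n)) * Vtil)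
          (Sum.inl j) (Sum.inl i) = 0 →
      (if ∃ (l k : Fin n ⊕ Fin n), Mbig j l = 1 ∧ Pbig l k = 1 ∧ Vbig k i = 1
        then (1 : ℝ) else 0) = 0 := by
  intro Mbig Vbig Qbig Pbig Vtil i j h
  rw [if_neg]
  rintro ⟨l, k, h1, h2, h3⟩
  -- Vbig k i = 1 forces k = inl k'
  obtain ⟨k', rfl⟩ : ∃ k', k = Sum.inl k' := by
    cases k with
    | inl k' => exact ⟨k', rfl⟩
    | inr k' => exact absurd (show (0:ℝ) = 1 from h3) (by norm_num)
  obtain ⟨l', rfl⟩ : ∃ l', l = Sum.inl l' := by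
    cases l with
    | inl l' => exact ⟨l', rfl⟩
    | inr l' => simp [Pbig, Matrix.fromBlocks] at h2
  have hl'k' : l' = k' := by
    by_contra hne
    have := hPdiag l' k' hne
    simp [Pbig, Matrix.fromBlocks, this] at h2
  subst hl'k'
  simp only [Mbig, Vbig, Pbig, Matrix.fromBlocks, Matrix.fromRows, Matrix.fromCols, Matrix.of_apply,
    Sum.elim_inl, Sum.elim_inr] at h1 h2 h3
  -- simplify the main hypothesis
  have key : ∑ a : Fin n, (Real.exp (∑ b : Fin n, M j b * P b a) - 1) * V a i = 0 := by
    have := h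
    simp only [Matrix.mul_apply, Matrix.sub_apply, expEntry, onesMat, Matrix.of_apply,
      Fintype.sum_sum_type, Qbig, Pbig, Mbig, Vtil, Vbig, Matrix.fromRows, Matrix.fromCols,
      Matrix.fromBlocks, Sum.elim_inl, Sum.elim_inr, Matrix.zero_apply, mul_zero, zero_mul,
      add_zero, Finset.sum_const_zero] at this
    dsimp only [Sum.elim, Matrix.of_apply, Matrix.zero_apply] at this
    simp only [mul_zero, Finset.sum_const_zero, add_zero] at this
    convert this using 2
  have hnn : ∀ a ∈ Finset.univ, 0 ≤ (Real.exp (∑ b : Fin n, M j b * P b a) - 1) * V a i := by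
    intro a _
    apply mul_nonneg
    · have : 0 ≤ ∑ b : Fin n, M j b * P b a := by
        apply Finset.sum_nonneg
        intro b _
        apply mul_nonneg
        · rcases hM j b with h | h <;> simp [h]
        · rcases hP01 b a with h | h <;> simp [h]
      nlinarith [Real.add_one_le_exp (∑ b : Fin n, M j b * P b a)]
    · rcases hV a i with h | h <;> simp [h]
  have := (Finset.sum_eq_zero_iff_of_nonneg hnn).mp key l' (Finset.mem_univ _)
  have hsum : (1:ℝ) ≤ ∑ b : Fin n, M j b * P b l' := by
    have : ∀ b ∈ Finset.univ, 0 ≤ M j b * P b l' := by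
      intro b _
      apply mul_nonneg
      · rcases hM j b with h | h <;> simp [h]
      · rcases hP01 b l' with h | h <;> simp [h]
    calc (1:ℝ) = M j l' * P l' l' := by rw [h1, h2]; ring
    _ ≤ ∑ b : Fin n, M j b * P b l' := Finset.single_le_sum this (Finset.mem_univ _)
  rw [show V l' i = 1 from h3, mul_one] at this
  have : Real.exp (∑ b : Fin n, M j b * P b l') ≥ Real.exp 1 := Real.exp_le_exp.mpr hsum
  nlinarith [Real.exp_one_gt_d9]
end
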